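/- For n = 2 and Θ ∈ [0, π), the level set {(λ₁, λ₂) ∈ ℝ² : λ₁ > tan(Θ − π/2), λ₂ > tan(Θ − π/2), arctan λ₁ + arctan λ₂ = Θ} is the graph of a convex function: explicitly, on this set λ₂ = tan(Θ − arctan λ₁), and the function λ₁ ↦ tan(Θ − arctan λ₁) is convex on the interval where it is defined and where arctan λ₁ < Θ and Θ − arctan λ₁ < π/2. Equivalently, the region {(λ₁, λ₂) : arctan λ₁ + arctan λ₂ ≥ Θ} ∩ {λ₁, λ₂ > tan(Θ − π/2)} is convex. -/

import Mathlib

open Real Set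

private lemma key_trig (Θ u₁ u₂ : ℝ) (hΘ0 : 0 ≤ Θ) (hΘπ : Θ ≤ Real.pi)
    (h1 : -(Real.pi/2) < u₁) (h12 : u₁ ≤ u₂) (h2 : u₂ < Real.pi/2) :
    Real.cos u₂ * Real.cos (Θ - u₁) ≤ Real.cos u₁ * Real.cos (Θ - u₂) := by
  have hδ : 0 ≤ Real.sin Θ * Real.sin (u₂ - u₁) := by
    apply mul_nonneg (Real.sin_nonneg_of_nonneg_of_le_pi hΘ0 hΘπ)
    exact Real.sin_nonneg_of_nonneg_of_le_pi (by linarith) (by linarith)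
  have hid : Real.cos u₁ * Real.cos (Θ - u₂) - Real.cos u₂ * Real.cos (Θ - u₁)
      = Real.sin Θ * Real.sin (u₂ - u₁) := by
    rw [Real.cos_sub, Real.cos_sub, Real.sin_sub]; ring
  linarith

private lemma aux_convex (Θ : ℝ) (hΘ0 : 0 < Θ) (hΘπ : Θ < Real.pi) :
    ConvexOn ℝ (Ioi (Real.tan (Θ - Real.pi/2)))
      (fun t => Real.tan (Θ - Real.arctan t)) := by
  have hb1 : -(Real.pi/2) < Θ - Real.pi/2 := by linarith
  have hb2 : Θ - Real.pi/2 < Real.pi/2 := by linarith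
  have ha_eq : Real.arctan (Real.tan (Θ - Real.pi/2)) = Θ - Real.pi/2 :=
    Real.arctan_tan hb1 hb2
  have hA : ∀ x ∈ Ioi (Real.tan (Θ - Real.pi/2)), Θ - Real.pi/2 < Real.arctan x := by
    intro x hx
    calc Θ - Real.pi/2 = Real.arctan (Real.tan (Θ - Real.pi/2)) := ha_eq.symm
      _ < Real.arctan x := Real.arctan_strictMono hx
  have hcos : ∀ x ∈ Ioi (Real.tan (Θ - Real.pi/2)), 0 < Real.cos (Θ - Real.arctan x) := by
    intro x hx
    apply Real.cos_pos_of_mem_Ioo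
    constructor
    · linarith [Real.arctan_lt_pi_div_two x]
    · linarith [hA x hx]
  have hder : ∀ x ∈ Ioi (Real.tan (Θ - Real.pi/2)),
      HasDerivAt (fun t => Real.tan (Θ - Real.arctan t))
        (-(Real.cos (Real.arctan x))^2 / (Real.cos (Θ - Real.arctan x))^2) x := by
    intro x hx
    have h1 : HasDerivAt (fun t : ℝ => Θ - Real.arctan t) (0 - 1/(1+x^2)) x :=
      (hasDerivAt_const x Θ).sub (Real.hasDerivAt_arctan x)
    have h2 := (Real.hasDerivAt_tan (hcos x hx).ne').comp x h1
    refine h2.congr_deriv ?_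
    rw [← Real.cos_sq_arctan]
    have := (hcos x hx).ne'
    field_simp
    ring
  refine MonotoneOn.convexOn_of_deriv (convex_Ioi _) ?_ ?_ ?_
  · intro x hx
    exact (hder x hx).continuousAt.continuousWithinAt
  · rw [interior_Ioi]
    intro x hx
    exact (hder x hx).differentiableAt.differentiableWithinAt
  · rw [interior_Ioi]
    intro x hx y hy hxy
    rw [(hder x hx).deriv, (hder y hy).deriv]
    have hcu : 0 < Real.cos (Real.arctan x) := Real.cos_arctan_pos x
    have hcv : 0 < Real.cos (Real.arctan y) := Real.cos_arctan_pos y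
    have hdu : 0 < Real.cos (Θ - Real.arctan x) := hcos x hx
    have hdv : 0 < Real.cos (Θ - Real.arctan y) := hcos y hy
    have hkey : Real.cos (Real.arctan y) * Real.cos (Θ - Real.arctan x)
        ≤ Real.cos (Real.arctan x) * Real.cos (Θ - Real.arctan y) :=
      key_trig Θ (Real.arctan x) (Real.arctan y) hΘ0.le hΘπ.le
        (Real.neg_pi_div_two_lt_arctan x) (Real.arctan_strictMono.monotone hxy)
        (Real.arctan_lt_pi_div_two y)
    rw [div_le_div_iff₀ (by positivity) (by positivity)]
    nlinarith [mul_nonneg (sub_nonneg.2 hkey)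
      (by positivity : (0:ℝ) ≤ Real.cos (Real.arctan x) * Real.cos (Θ - Real.arctan y)
        + Real.cos (Real.arctan y) * Real.cos (Θ - Real.arctan x))]

/-- Convexity of the level set of the two-dimensional special Lagrangian operator at
critical and supercritical phase `Θ ∈ [0, π)`: on the level set `λ₂ = tan(Θ − arctan λ₁)`,
the function `λ₁ ↦ tan(Θ − arctan λ₁)` is convex, and the super-level region is convex. -/
theorem stmt19 (Θ : ℝ) (hΘ0 : 0 ≤ Θ) (hΘπ : Θ < Real.pi) :
    (∀ l1 l2 : ℝ, Real.tan (Θ - Real.pi / 2) < l1 → Real.tan (Θ - Real.pi / 2) < l2 →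
      Real.arctan l1 + Real.arctan l2 = Θ → l2 = Real.tan (Θ - Real.arctan l1)) ∧
    ConvexOn ℝ {t : ℝ | Real.tan (Θ - Real.pi / 2) < t ∧ Real.arctan t < Θ ∧
        Θ - Real.arctan t < Real.pi / 2}
      (fun t => Real.tan (Θ - Real.arctan t)) ∧
    Convex ℝ {p : ℝ × ℝ | Θ ≤ Real.arctan p.1 + Real.arctan p.2 ∧
      Real.tan (Θ - Real.pi / 2) < p.1 ∧ Real.tan (Θ - Real.pi / 2) < p.2} := by
  refine ⟨?_, ?_, ?_⟩
  · intro l1 l2 _ _ heq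
    rw [show Θ - Real.arctan l1 = Real.arctan l2 by linarith, Real.tan_arctan]
  · rcases eq_or_lt_of_le hΘ0 with h0 | h0
    · have hset : {t : ℝ | Real.tan (Θ - Real.pi / 2) < t ∧ Real.arctan t < Θ ∧
          Θ - Real.arctan t < Real.pi / 2} = ∅ := by
        rw [eq_empty_iff_forall_notMem]
        rintro t ⟨ht1, ht2, -⟩
        rw [← h0, zero_sub, Real.tan_neg, Real.tan_pi_div_two, neg_zero] at ht1
        rw [← h0] at ht2
        have : Real.arctan 0 < Real.arctan t := Real.arctan_strictMono ht1
        rw [Real.arctan_zero] at this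
        linarith
      rw [hset]
      exact ⟨convex_empty, by simp⟩
    · refine (aux_convex Θ h0 hΘπ).subset (fun t ht => ht.1) ?_
      apply Set.OrdConnected.convex
      refine ⟨fun x hx y hy => fun z hz => ?_⟩
      have h1 := Real.arctan_strictMono.monotone hz.1
      have h2 := Real.arctan_strictMono.monotone hz.2
      exact ⟨lt_of_lt_of_le hx.1 hz.1, lt_of_le_of_lt h2 hy.2.1,
        by linarith [hx.2.2]⟩
  · rcases eq_or_lt_of_le hΘ0 with h0 | h0
    · have htan0 : Real.tan (Θ - Real.pi / 2) = 0 := by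
        rw [← h0, zero_sub, Real.tan_neg, Real.tan_pi_div_two, neg_zero]
      have hset : {p : ℝ × ℝ | Θ ≤ Real.arctan p.1 + Real.arctan p.2 ∧
          Real.tan (Θ - Real.pi / 2) < p.1 ∧ Real.tan (Θ - Real.pi / 2) < p.2}
          = Ioi (0:ℝ) ×ˢ Ioi (0:ℝ) := by
        ext ⟨x, y⟩
        simp only [mem_setOf_eq, htan0, mem_prod, mem_Ioi]
        constructor
        · rintro ⟨-, hx, hy⟩; exact ⟨hx, hy⟩
        · rintro ⟨hx, hy⟩
          have h1 : Real.arctan 0 < Real.arctan x := Real.arctan_strictMono hx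
          have h2 : Real.arctan 0 < Real.arctan y := Real.arctan_strictMono hy
          rw [Real.arctan_zero] at h1 h2
          exact ⟨by linarith [h0], hx, hy⟩
      rw [hset]
      exact (convex_Ioi 0).prod (convex_Ioi 0)
    · have hb1 : -(Real.pi/2) < Θ - Real.pi/2 := by linarith
      have hb2 : Θ - Real.pi/2 < Real.pi/2 := by linarith
      have ha_eq : Real.arctan (Real.tan (Θ - Real.pi/2)) = Θ - Real.pi/2 :=
        Real.arctan_tan hb1 hb2
      have hset : {p : ℝ × ℝ | Θ ≤ Real.arctan p.1 + Real.arctan p.2 ∧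
          Real.tan (Θ - Real.pi / 2) < p.1 ∧ Real.tan (Θ - Real.pi / 2) < p.2}
          = {p : ℝ × ℝ | p.1 ∈ Ioi (Real.tan (Θ - Real.pi/2)) ∧
            (fun t => Real.tan (Θ - Real.arctan t)) p.1 ≤ p.2} := by
        ext ⟨x, y⟩
        simp only [mem_setOf_eq, mem_Ioi]
        constructor
        · rintro ⟨hsum, hx, -⟩
          refine ⟨hx, ?_⟩
          have hux : Θ - Real.pi/2 < Real.arctan x := by
            calc Θ - Real.pi/2 = Real.arctan (Real.tan (Θ - Real.pi/2)) := ha_eq.symm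
              _ < Real.arctan x := Real.arctan_strictMono hx
          have hc1 : -(Real.pi/2) < Θ - Real.arctan x := by
            linarith [Real.arctan_lt_pi_div_two x]
          have hc2 : Θ - Real.arctan x < Real.pi/2 := by linarith
          calc Real.tan (Θ - Real.arctan x)
              ≤ Real.tan (Real.arctan y) :=
                Real.strictMonoOn_tan.monotoneOn ⟨hc1, hc2⟩
                  ⟨Real.neg_pi_div_two_lt_arctan y, Real.arctan_lt_pi_div_two y⟩
                  (by linarith)
            _ = y := Real.tan_arctan y
        · rintro ⟨hx, hfy⟩
          have hux : Θ - Real.pi/2 < Real.arctan x := by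
            calc Θ - Real.pi/2 = Real.arctan (Real.tan (Θ - Real.pi/2)) := ha_eq.symm
              _ < Real.arctan x := Real.arctan_strictMono hx
          have hc1 : -(Real.pi/2) < Θ - Real.arctan x := by
            linarith [Real.arctan_lt_pi_div_two x]
          have hc2 : Θ - Real.arctan x < Real.pi/2 := by linarith
          have hay : Real.tan (Θ - Real.pi/2) < y :=
            lt_of_lt_of_le
              (Real.strictMonoOn_tan ⟨hb1, hb2⟩ ⟨hc1, hc2⟩
                (by linarith [Real.arctan_lt_pi_div_two x])) hfy
          have hsum : Θ - Real.arctan x ≤ Real.arctan y := by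
            have h := Real.arctan_strictMono.monotone hfy
            rwa [Real.arctan_tan hc1 hc2] at h
          exact ⟨by linarith, hx, hay⟩
      rw [hset]
      exact (aux_convex Θ h0 hΘπ).convex_epigraph
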